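/- Let q with |q| < 1 and complex a, x, z (|x| small enough for convergence, all denominators nonzero). Then ∑_{k=0}^{∞} (z; q)_k x^k = ∑_{k=0}^{∞} (1 − x z q^{2k}) ((z; q)_k / (x; q)_{k+1}) q^{k(3k−1)/2} (−1)^k (x^2 z)^k. -/

import Mathlib

open Finset Complex

/-- finite q-Pochhammer symbol `(x; q)_n` -/
noncomputable def qp (q x : ℂ) (n : ℕ) : ℂ := ∏ j ∈ Finset.range n, (1 - x * q ^ j)

/-- infinite q-Pochhammer symbol `(x; q)_∞` -/
noncomputable def qpi (q x : ℂ) : ℂ := ∏' j : ℕ, (1 - x * q ^ j)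


lemma qp_zero (q c : ℂ) : qp q c 0 = 1 := by simp [qp]

lemma qp_succ (q c : ℂ) (n : ℕ) : qp q c (n + 1) = qp q c n * (1 - c * q ^ n) := by
  simp [qp, Finset.prod_range_succ]

lemma qp_succ' (q c : ℂ) (n : ℕ) : qp q c (n + 1) = (1 - c) * qp q (c * q) n := by
  rw [qp, Finset.prod_range_succ', qp, mul_comm]
  congr 1
  · simp
  · exact Finset.prod_congr rfl fun i _ => by ring

lemma E_succ (n : ℕ) : (n + 1) * (3 * (n + 1) - 1) / 2 = n * (3 * n - 1) / 2 + (3 * n + 1) := by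
  rcases n with _ | m
  · norm_num
  · have h3 : 3 * (m + 1) - 1 = 3 * m + 2 := by omega
    have h4 : 3 * (m + 1 + 1) - 1 = 3 * m + 5 := by omega
    rw [h3, h4]
    have h1 : (m + 1 + 1) * (3 * m + 5) = (m + 1) * (3 * m + 2) + (3 * (m + 1) + 1) * 2 := by ring
    rw [h1, Nat.add_mul_div_right _ _ (by norm_num : (0:ℕ) < 2)]

lemma norm_qp_le {q : ℂ} (hq : ‖q‖ < 1) (c : ℂ) (n : ℕ) :
    ‖qp q c n‖ ≤ Real.exp (‖c‖ / (1 - ‖q‖)) := by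
  have h0 : (0:ℝ) ≤ ‖q‖ := norm_nonneg q
  have h1 : (0:ℝ) < 1 - ‖q‖ := by linarith
  calc ‖qp q c n‖ = ∏ j ∈ Finset.range n, ‖1 - c * q ^ j‖ := by
        rw [qp]; exact norm_prod _ _
    _ ≤ ∏ j ∈ Finset.range n, Real.exp (‖c‖ * ‖q‖ ^ j) := by
        refine Finset.prod_le_prod (fun j _ => norm_nonneg _) (fun j _ => ?_)
        have : ‖1 - c * q ^ j‖ ≤ 1 + ‖c‖ * ‖q‖ ^ j := by
          calc ‖1 - c * q ^ j‖ ≤ ‖(1:ℂ)‖ + ‖c * q ^ j‖ := norm_sub_le _ _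
            _ = 1 + ‖c‖ * ‖q‖ ^ j := by rw [norm_one, norm_mul, norm_pow]
        have h2 := Real.add_one_le_exp (‖c‖ * ‖q‖ ^ j)
        linarith
    _ = Real.exp (∑ j ∈ Finset.range n, ‖c‖ * ‖q‖ ^ j) := (Real.exp_sum _ _).symm
    _ ≤ Real.exp (‖c‖ / (1 - ‖q‖)) := by
        apply Real.exp_le_exp.2
        rw [← Finset.mul_sum, div_eq_mul_inv]
        refine mul_le_mul_of_nonneg_left ?_ (norm_nonneg c)
        rw [← tsum_geometric_of_lt_one h0 hq]
        exact Summable.sum_le_tsum _ (fun i _ => pow_nonneg h0 i)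
          (summable_geometric_of_lt_one h0 hq)

lemma summable_Fterm {q t : ℂ} (hq : ‖q‖ < 1) (ht : ‖t‖ < 1) (c : ℂ) :
    Summable fun k : ℕ => qp q c k * t ^ k := by
  apply Summable.of_norm_bounded (g := fun k => Real.exp (‖c‖ / (1 - ‖q‖)) * ‖t‖ ^ k)
    ((summable_geometric_of_lt_one (norm_nonneg t) ht).mul_left _)
  intro k
  rw [norm_mul, norm_pow]
  exact mul_le_mul_of_nonneg_right (norm_qp_le hq c k) (pow_nonneg (norm_nonneg t) k)

noncomputable def Fq (q c t : ℂ) : ℂ := ∑' k : ℕ, qp q c k * t ^ k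

lemma norm_Fq_le {q t : ℂ} (hq : ‖q‖ < 1) (ht : ‖t‖ < 1) (c : ℂ) :
    ‖Fq q c t‖ ≤ Real.exp (‖c‖ / (1 - ‖q‖)) * (1 - ‖t‖)⁻¹ := by
  have hs : Summable fun k : ℕ => ‖qp q c k * t ^ k‖ := by
    have := (summable_Fterm hq ht c).norm
    exact this
  refine (norm_tsum_le_tsum_norm hs).trans ?_
  rw [← tsum_geometric_of_lt_one (norm_nonneg t) ht, ← tsum_mul_left]
  refine Summable.tsum_le_tsum (fun k => ?_) hs
    ((summable_geometric_of_lt_one (norm_nonneg t) ht).mul_left _)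
  rw [norm_mul, norm_pow]
  exact mul_le_mul_of_nonneg_right (norm_qp_le hq c k) (pow_nonneg (norm_nonneg t) k)


lemma Fq_A {q t : ℂ} (hq : ‖q‖ < 1) (ht : ‖t‖ < 1) (c : ℂ) :
    (1 - t) * Fq q c t = 1 - c * t * Fq q c (q * t) := by
  have hs := summable_Fterm hq ht c
  have hs1 : Summable fun k : ℕ => qp q c (k + 1) * t ^ (k + 1) :=
    (summable_nat_add_iff (f := fun k : ℕ => qp q c k * t ^ k) 1).2 hs
  have hg : Summable fun k : ℕ => qp q c k * t ^ (k + 1) := by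
    have := hs.mul_left t
    refine this.congr fun k => ?_
    ring
  have e1 : Fq q c t = 1 + ∑' k : ℕ, qp q c (k + 1) * t ^ (k + 1) := by
    rw [Fq, Summable.tsum_eq_zero_add hs, qp_zero]
    simp
  have e2 : t * Fq q c t = ∑' k : ℕ, qp q c k * t ^ (k + 1) := by
    rw [Fq, ← tsum_mul_left]
    exact tsum_congr fun k => by ring
  have e3 : (1 - t) * Fq q c t
      = 1 + ∑' k : ℕ, (qp q c (k + 1) * t ^ (k + 1) - qp q c k * t ^ (k + 1)) := by
    rw [Summable.tsum_sub hs1 hg, sub_mul, e2, one_mul, e1]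
    ring
  rw [e3]
  have e4 : ∀ k : ℕ, qp q c (k + 1) * t ^ (k + 1) - qp q c k * t ^ (k + 1)
      = -(c * t) * (qp q c k * (q * t) ^ k) := by
    intro k
    rw [qp_succ]
    ring
  rw [tsum_congr e4, tsum_mul_left]
  rw [Fq]
  ring

lemma Fq_B {q s : ℂ} (hq : ‖q‖ < 1) (hs : ‖s‖ < 1) (c : ℂ) :
    Fq q c s = 1 + (1 - c) * s * Fq q (c * q) s := by
  have hsum := summable_Fterm hq hs c
  rw [Fq, Summable.tsum_eq_zero_add hsum, qp_zero]
  have e : ∀ k : ℕ, qp q c (k + 1) * s ^ (k + 1)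
      = (1 - c) * s * (qp q (c * q) k * s ^ k) := by
    intro k
    rw [qp_succ']
    ring
  rw [tsum_congr e, tsum_mul_left, Fq]
  simp

lemma Fq_step {q t : ℂ} (hq : ‖q‖ < 1) (ht : ‖t‖ < 1) (c : ℂ) :
    (1 - t) * Fq q c t = 1 - c * t - c * (1 - c) * q * t ^ 2 * Fq q (c * q) (q * t) := by
  have hqt : ‖q * t‖ < 1 := by
    rw [norm_mul]
    calc ‖q‖ * ‖t‖ ≤ 1 * ‖t‖ := mul_le_mul_of_nonneg_right hq.le (norm_nonneg t)
      _ = ‖t‖ := one_mul _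
      _ < 1 := ht
  rw [Fq_A hq ht c, Fq_B hq hqt c]
  ring


lemma one_sub_sum_le_prod (s : Finset ℕ) (f : ℕ → ℝ) (h0 : ∀ i ∈ s, 0 ≤ f i) (h1 : ∀ i ∈ s, f i ≤ 1) :
    1 - ∑ i ∈ s, f i ≤ ∏ i ∈ s, (1 - f i) := by
  classical
  induction s using Finset.induction with
  | empty => simp
  | insert a t ha ih =>
    rw [Finset.prod_insert ha, Finset.sum_insert ha]
    have h0a : 0 ≤ f a := h0 a (Finset.mem_insert_self a t)
    have h1a : f a ≤ 1 := h1 a (Finset.mem_insert_self a t)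
    have h0t : ∀ i ∈ t, 0 ≤ f i := fun i hi => h0 i (Finset.mem_insert_of_mem hi)
    have h1t : ∀ i ∈ t, f i ≤ 1 := fun i hi => h1 i (Finset.mem_insert_of_mem hi)
    have hS : 0 ≤ ∑ i ∈ t, f i := Finset.sum_nonneg h0t
    have hind := ih h0t h1t
    nlinarith [hind, h0a, h1a, hS]

lemma exists_qp_lb {q x : ℂ} (hq : ‖q‖ < 1) (hx : ‖x‖ < 1) (hxp : ∀ m : ℕ, x * q ^ m ≠ 1) :
    ∃ δ : ℝ, 0 < δ ∧ ∀ n : ℕ, δ ≤ ‖qp q x n‖ := by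
  have h0q : (0:ℝ) ≤ ‖q‖ := norm_nonneg q
  have h1q : (0:ℝ) < 1 - ‖q‖ := by linarith
  have hne : ∀ n : ℕ, qp q x n ≠ 0 := by
    intro n
    rw [qp]
    exact Finset.prod_ne_zero_iff.2 fun j _ => sub_ne_zero.2 (Ne.symm (hxp j))
  -- choose J with tail sum ≤ 1/2
  have htt : Filter.Tendsto (fun J : ℕ => ‖x‖ * ‖q‖ ^ J / (1 - ‖q‖)) Filter.atTop (nhds 0) := by
    have h := tendsto_pow_atTop_nhds_zero_of_lt_one h0q hq
    have := (h.const_mul ‖x‖).div_const (1 - ‖q‖)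
    simpa using this
  obtain ⟨J, hJ⟩ := (htt.eventually_lt_const (by norm_num : (0:ℝ) < 1/2)).exists
  -- for n ≥ J, the tail product is ≥ 1/2
  have htail : ∀ n : ℕ, J ≤ n → ‖qp q x J‖ / 2 ≤ ‖qp q x n‖ := by
    intro n hn
    have hsplit : qp q x J * ∏ j ∈ Finset.Ico J n, (1 - x * q ^ j) = qp q x n := by
      rw [qp, qp]
      exact Finset.prod_range_mul_prod_Ico _ hn
    have hfac : ∀ j ∈ Finset.Ico J n, (1:ℝ) - ‖x‖ * ‖q‖ ^ j ≤ ‖1 - x * q ^ j‖ := by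
      intro j _
      calc (1:ℝ) - ‖x‖ * ‖q‖ ^ j = ‖(1:ℂ)‖ - ‖x * q ^ j‖ := by
            rw [norm_one, norm_mul, norm_pow]
        _ ≤ ‖1 - x * q ^ j‖ := norm_sub_norm_le _ _
    have hfn : ∀ j : ℕ, 0 ≤ ‖x‖ * ‖q‖ ^ j := fun j =>
      mul_nonneg (norm_nonneg x) (pow_nonneg h0q j)
    have hf1 : ∀ j : ℕ, ‖x‖ * ‖q‖ ^ j ≤ 1 := by
      intro j
      have : ‖q‖ ^ j ≤ 1 := pow_le_one₀ h0q hq.le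
      nlinarith [norm_nonneg x]
    have hsum : ∑ j ∈ Finset.Ico J n, ‖x‖ * ‖q‖ ^ j ≤ 1/2 := by
      have : ∑ j ∈ Finset.Ico J n, ‖x‖ * ‖q‖ ^ j
          = ‖x‖ * ‖q‖ ^ J * ∑ i ∈ Finset.range (n - J), ‖q‖ ^ i := by
        rw [Finset.sum_Ico_eq_sum_range, Finset.mul_sum]
        exact Finset.sum_congr rfl fun i _ => by rw [pow_add]; ring
      rw [this]
      calc ‖x‖ * ‖q‖ ^ J * ∑ i ∈ Finset.range (n - J), ‖q‖ ^ i
          ≤ ‖x‖ * ‖q‖ ^ J * (1 - ‖q‖)⁻¹ := by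
            refine mul_le_mul_of_nonneg_left ?_ (hfn J)
            rw [← tsum_geometric_of_lt_one h0q hq]
            exact Summable.sum_le_tsum _ (fun i _ => pow_nonneg h0q i)
              (summable_geometric_of_lt_one h0q hq)
        _ ≤ 1/2 := by
            rw [← div_eq_mul_inv] at *
            exact hJ.le
    have hprod : (1:ℝ)/2 ≤ ‖∏ j ∈ Finset.Ico J n, (1 - x * q ^ j)‖ := by
      rw [norm_prod]
      calc (1:ℝ)/2 ≤ 1 - ∑ j ∈ Finset.Ico J n, ‖x‖ * ‖q‖ ^ j := by linarith
        _ ≤ ∏ j ∈ Finset.Ico J n, (1 - ‖x‖ * ‖q‖ ^ j) :=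
            one_sub_sum_le_prod _ _ (fun i _ => hfn i) (fun i _ => hf1 i)
        _ ≤ ∏ j ∈ Finset.Ico J n, ‖1 - x * q ^ j‖ :=
            Finset.prod_le_prod (fun i _ => by nlinarith [hfn i, hf1 i]) hfac
    calc ‖qp q x J‖ / 2 = ‖qp q x J‖ * (1/2) := by ring
      _ ≤ ‖qp q x J‖ * ‖∏ j ∈ Finset.Ico J n, (1 - x * q ^ j)‖ :=
          mul_le_mul_of_nonneg_left hprod (norm_nonneg _)
      _ = ‖qp q x n‖ := by rw [← norm_mul, hsplit]
  -- min over n ≤ J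
  set δ0 : ℝ := (Finset.range (J + 1)).inf' ⟨0, Finset.mem_range.2 (Nat.succ_pos J)⟩
      (fun m => ‖qp q x m‖) with hδ0
  have hδ0pos : 0 < δ0 := by
    rw [hδ0]
    exact (Finset.lt_inf'_iff _).2 fun m _ => norm_pos_iff.2 (hne m)
  refine ⟨δ0 / 2, by linarith, fun n => ?_⟩
  rcases le_or_gt n J with h | h
  · have : δ0 ≤ ‖qp q x n‖ :=
      Finset.inf'_le _ (Finset.mem_range.2 (Nat.lt_succ_of_le h))
    linarith
  · have h1 : δ0 ≤ ‖qp q x J‖ :=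
      Finset.inf'_le _ (Finset.mem_range.2 (Nat.lt_succ_of_le le_rfl))
    have := htail n h.le
    linarith


lemma ev_bound {r w : ℝ} (hr0 : 0 ≤ r) (hr : r < 1) (hw : 0 ≤ w) :
    ∀ᶠ N : ℕ in Filter.atTop, r ^ (N * (3 * N - 1) / 2) * w ^ N ≤ (1/2) ^ N := by
  obtain ⟨N₀, hN₀⟩ : ∃ N₀ : ℕ, r ^ N₀ < 1 / (2 * (w + 1)) :=
    ((tendsto_pow_atTop_nhds_zero_of_lt_one hr0 hr).eventually_lt_const
      (by positivity : (0:ℝ) < 1 / (2 * (w + 1)))).exists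
  have hkey : r ^ N₀ * w ≤ 1/2 := by
    have h1 : r ^ N₀ * w ≤ 1 / (2 * (w + 1)) * w :=
      mul_le_mul_of_nonneg_right hN₀.le hw
    have h2 : 1 / (2 * (w + 1)) * w ≤ 1/2 := by
      rw [div_mul_eq_mul_div, div_le_div_iff₀ (by positivity) (by norm_num)]
      nlinarith
    linarith
  filter_upwards [Filter.eventually_ge_atTop (N₀ + 1)] with N hN
  have hE : N₀ * N ≤ N * (3 * N - 1) / 2 := by
    have h1 : 2 * N₀ ≤ 3 * N - 1 := by omega
    have h2 : N * (2 * N₀) ≤ N * (3 * N - 1) := Nat.mul_le_mul_left _ h1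
    calc N₀ * N = N * (2 * N₀) / 2 := by
          rw [show N * (2 * N₀) = N₀ * N * 2 by ring, Nat.mul_div_cancel _ two_pos]
      _ ≤ N * (3 * N - 1) / 2 := Nat.div_le_div_right h2
  calc r ^ (N * (3 * N - 1) / 2) * w ^ N ≤ r ^ (N₀ * N) * w ^ N :=
        mul_le_mul_of_nonneg_right (pow_le_pow_of_le_one hr0 hr.le hE) (pow_nonneg hw N)
    _ = (r ^ N₀ * w) ^ N := by rw [pow_mul, ← mul_pow]
    _ ≤ (1/2) ^ N := pow_le_pow_left₀ (by positivity) hkey N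

noncomputable def cterm (q x z : ℂ) (n : ℕ) : ℂ :=
  (1 - x * z * q ^ (2 * n)) * (qp q z n / qp q x (n + 1)) *
    q ^ (n * (3 * n - 1) / 2) * (-1) ^ n * (x ^ 2 * z) ^ n

noncomputable def Pre (q x z : ℂ) (N : ℕ) : ℂ :=
  (-1) ^ N * (x ^ 2 * z) ^ N * qp q z N * q ^ (N * (3 * N - 1) / 2) / qp q x N

theorem stmt_11 (q a x z : ℂ) (hq : ‖q‖ < 1) (hx : ‖x‖ < 1)
    (hxp : ∀ m : ℕ, x * q ^ m ≠ 1) :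
    ∑' k : ℕ, qp q z k * x ^ k =
      ∑' k : ℕ, (1 - x * z * q ^ (2 * k)) * (qp q z k / qp q x (k + 1)) *
        q ^ (k * (3 * k - 1) / 2) * (-1) ^ k * (x ^ 2 * z) ^ k := by
  have hq' : ‖q‖ < 1 := hq
  have hx' : ‖x‖ < 1 := hx
  have h0q : (0:ℝ) ≤ ‖q‖ := norm_nonneg q
  have hqp0 : ∀ n : ℕ, qp q x n ≠ 0 := by
    intro n
    rw [qp]
    exact Finset.prod_ne_zero_iff.2 fun j _ => sub_ne_zero.2 (Ne.symm (hxp j))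
  have hqN1 : ∀ N : ℕ, ‖x * q ^ N‖ < 1 := by
    intro N
    rw [norm_mul, norm_pow]
    calc ‖x‖ * ‖q‖ ^ N ≤ ‖x‖ * 1 :=
          mul_le_mul_of_nonneg_left (pow_le_one₀ h0q hq'.le) (norm_nonneg x)
      _ < 1 := by rwa [mul_one]
  -- the key finite iteration
  have key : ∀ N : ℕ, Fq q z x
      = (∑ n ∈ Finset.range N, cterm q x z n)
        + Pre q x z N * Fq q (z * q ^ N) (x * q ^ N) := by
    intro N
    induction N with
    | zero => simp [Pre, qp_zero]
    | succ N ih =>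
      have hne1 : (1:ℂ) - x * q ^ N ≠ 0 := sub_ne_zero.2 (Ne.symm (hxp N))
      have hstep := Fq_step hq' (hqN1 N) (z * q ^ N)
      have e1 : z * q ^ N * q = z * q ^ (N + 1) := by ring
      have e2 : q * (x * q ^ N) = x * q ^ (N + 1) := by ring
      rw [e1, e2] at hstep
      have hF : Fq q (z * q ^ N) (x * q ^ N)
          = (1 - z * q ^ N * (x * q ^ N)
              - z * q ^ N * (1 - z * q ^ N) * q * (x * q ^ N) ^ 2
                * Fq q (z * q ^ (N + 1)) (x * q ^ (N + 1))) / (1 - x * q ^ N) := by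
        rw [eq_div_iff hne1]
        linear_combination hstep
      rw [ih, hF, Finset.sum_range_succ, add_assoc]
      congr 1
      simp only [cterm, Pre]
      rw [qp_succ q z N, qp_succ q x N, E_succ, pow_add]
      have h1 := hqp0 N
      have h2 : (1:ℂ) - x * q ^ N ≠ 0 := hne1
      field_simp
      ring
  -- bounds
  obtain ⟨δ, hδ, hlb⟩ := exists_qp_lb hq' hx' hxp
  set C : ℝ := Real.exp (‖z‖ / (1 - ‖q‖)) with hC
  have hCpos : 0 < C := Real.exp_pos _
  set w : ℝ := ‖x‖ ^ 2 * ‖z‖ with hw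
  have hw0 : 0 ≤ w := by positivity
  have hcb : ∀ n : ℕ, ‖cterm q x z n‖
      ≤ ((1 + ‖x‖ * ‖z‖) * (C / δ)) * (‖q‖ ^ (n * (3 * n - 1) / 2) * w ^ n) := by
    intro n
    have hb1 : ‖(1:ℂ) - x * z * q ^ (2 * n)‖ ≤ 1 + ‖x‖ * ‖z‖ := by
      calc ‖(1:ℂ) - x * z * q ^ (2 * n)‖ ≤ ‖(1:ℂ)‖ + ‖x * z * q ^ (2 * n)‖ := norm_sub_le _ _
        _ = 1 + ‖x‖ * ‖z‖ * ‖q‖ ^ (2 * n) := by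
            rw [norm_one, norm_mul, norm_mul, norm_pow]
        _ ≤ 1 + ‖x‖ * ‖z‖ * 1 := by
            have : ‖q‖ ^ (2 * n) ≤ 1 := pow_le_one₀ h0q hq'.le
            nlinarith [norm_nonneg x, norm_nonneg z,
              mul_nonneg (norm_nonneg x) (norm_nonneg z)]
        _ = 1 + ‖x‖ * ‖z‖ := by ring
    have hb2 : ‖qp q z n / qp q x (n + 1)‖ ≤ C / δ := by
      rw [norm_div]
      exact div_le_div₀ hCpos.le (norm_qp_le hq' z n) hδ (hlb (n + 1))
    calc ‖cterm q x z n‖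
        = ‖(1:ℂ) - x * z * q ^ (2 * n)‖ * ‖qp q z n / qp q x (n + 1)‖
            * ‖q‖ ^ (n * (3 * n - 1) / 2) * 1 * (‖x‖ ^ 2 * ‖z‖) ^ n := by
          simp only [cterm]
          rw [norm_mul, norm_mul, norm_mul, norm_mul, norm_pow, norm_pow, norm_pow,
            norm_mul, norm_pow, norm_neg, norm_one, one_pow]
      _ ≤ (1 + ‖x‖ * ‖z‖) * (C / δ) * ‖q‖ ^ (n * (3 * n - 1) / 2) * 1 * (‖x‖ ^ 2 * ‖z‖) ^ n := by
          gcongr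
      _ = ((1 + ‖x‖ * ‖z‖) * (C / δ)) * (‖q‖ ^ (n * (3 * n - 1) / 2) * w ^ n) := by
          rw [hw]; ring
  have hev := ev_bound h0q hq' hw0
  have hsumc : Summable (cterm q x z) := by
    refine Summable.of_norm_bounded_eventually_nat
      (g := fun n => ((1 + ‖x‖ * ‖z‖) * (C / δ)) * (1/2) ^ n)
      ((summable_geometric_of_lt_one (by norm_num) (by norm_num)).mul_left _) ?_
    filter_upwards [hev] with n hn
    refine (hcb n).trans ?_
    have hK : 0 ≤ (1 + ‖x‖ * ‖z‖) * (C / δ) := by positivity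
    exact mul_le_mul_of_nonneg_left hn hK
  -- remainder tends to zero
  have hrem : Filter.Tendsto
      (fun N : ℕ => Pre q x z N * Fq q (z * q ^ N) (x * q ^ N))
      Filter.atTop (nhds 0) := by
    have hM : ∀ N : ℕ, ‖Fq q (z * q ^ N) (x * q ^ N)‖ ≤ C * (1 - ‖x‖)⁻¹ := by
      intro N
      refine (norm_Fq_le hq' (hqN1 N) (z * q ^ N)).trans ?_
      have hz1 : ‖z * q ^ N‖ ≤ ‖z‖ := by
        rw [norm_mul, norm_pow]
        calc ‖z‖ * ‖q‖ ^ N ≤ ‖z‖ * 1 :=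
              mul_le_mul_of_nonneg_left (pow_le_one₀ h0q hq'.le) (norm_nonneg z)
          _ = ‖z‖ := mul_one _
      have hx1 : ‖x * q ^ N‖ ≤ ‖x‖ := by
        rw [norm_mul, norm_pow]
        calc ‖x‖ * ‖q‖ ^ N ≤ ‖x‖ * 1 :=
              mul_le_mul_of_nonneg_left (pow_le_one₀ h0q hq'.le) (norm_nonneg x)
          _ = ‖x‖ := mul_one _
      have h1x : (0:ℝ) < 1 - ‖x‖ := by linarith
      have h1q : (0:ℝ) < 1 - ‖q‖ := by linarith
      have e1 : Real.exp (‖z * q ^ N‖ / (1 - ‖q‖)) ≤ C := by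
        rw [hC]
        apply Real.exp_le_exp.2
        gcongr
      have e2 : (1 - ‖x * q ^ N‖)⁻¹ ≤ (1 - ‖x‖)⁻¹ := by
        apply inv_anti₀ h1x
        linarith
      exact mul_le_mul e1 e2 (inv_nonneg.2 (by linarith [hqN1 N])) hCpos.le
    have hPre : ∀ N : ℕ, ‖Pre q x z N‖
        ≤ (C / δ) * (‖q‖ ^ (N * (3 * N - 1) / 2) * w ^ N) := by
      intro N
      simp only [Pre, norm_div]
      have hnum : ‖(-1:ℂ) ^ N * (x ^ 2 * z) ^ N * qp q z N * q ^ (N * (3 * N - 1) / 2)‖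
          ≤ (‖x‖ ^ 2 * ‖z‖) ^ N * C * ‖q‖ ^ (N * (3 * N - 1) / 2) := by
        calc ‖(-1:ℂ) ^ N * (x ^ 2 * z) ^ N * qp q z N * q ^ (N * (3 * N - 1) / 2)‖
            = (‖x‖ ^ 2 * ‖z‖) ^ N * ‖qp q z N‖ * ‖q‖ ^ (N * (3 * N - 1) / 2) := by
              simp only [norm_mul, norm_pow, norm_neg, norm_one, one_pow, one_mul]
          _ ≤ (‖x‖ ^ 2 * ‖z‖) ^ N * C * ‖q‖ ^ (N * (3 * N - 1) / 2) := by
              gcongr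
              exact norm_qp_le hq' z N
      refine (div_le_div₀ (by positivity) hnum hδ (hlb N)).trans (le_of_eq ?_)
      rw [hw]; ring
    have hb : ∀ N : ℕ, ‖Pre q x z N * Fq q (z * q ^ N) (x * q ^ N)‖
        ≤ ((C / δ) * (C * (1 - ‖x‖)⁻¹)) * (‖q‖ ^ (N * (3 * N - 1) / 2) * w ^ N) := by
      intro N
      rw [norm_mul]
      calc ‖Pre q x z N‖ * ‖Fq q (z * q ^ N) (x * q ^ N)‖
          ≤ ((C / δ) * (‖q‖ ^ (N * (3 * N - 1) / 2) * w ^ N)) * (C * (1 - ‖x‖)⁻¹) :=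
            mul_le_mul (hPre N) (hM N) (norm_nonneg _) (by positivity)
        _ = _ := by ring
    have h1x : (0:ℝ) < 1 - ‖x‖ := by linarith
    have hev2 : ∀ᶠ N : ℕ in Filter.atTop,
        ‖Pre q x z N * Fq q (z * q ^ N) (x * q ^ N)‖
          ≤ ((C / δ) * (C * (1 - ‖x‖)⁻¹)) * (1/2) ^ N := by
      filter_upwards [hev] with N hN
      refine (hb N).trans ?_
      exact mul_le_mul_of_nonneg_left hN (by positivity)
    have htend : Filter.Tendsto (fun N : ℕ => ((C / δ) * (C * (1 - ‖x‖)⁻¹)) * (1/2) ^ N)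
        Filter.atTop (nhds 0) := by
      have := (tendsto_pow_atTop_nhds_zero_of_lt_one (by norm_num : (0:ℝ) ≤ 1/2)
        (by norm_num : (1:ℝ)/2 < 1)).const_mul ((C / δ) * (C * (1 - ‖x‖)⁻¹))
      simpa using this
    exact squeeze_zero_norm' hev2 htend
  -- conclude
  have h1 : Filter.Tendsto (fun N : ℕ => ∑ n ∈ Finset.range N, cterm q x z n)
      Filter.atTop (nhds (∑' n, cterm q x z n)) := hsumc.hasSum.tendsto_sum_nat
  have h3 := h1.add hrem
  rw [add_zero] at h3
  have h4 : (fun N : ℕ => (∑ n ∈ Finset.range N, cterm q x z n)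
      + Pre q x z N * Fq q (z * q ^ N) (x * q ^ N)) = fun _ => Fq q z x :=
    funext fun N => (key N).symm
  rw [h4] at h3
  have hfin : Fq q z x = ∑' n, cterm q x z n :=
    tendsto_nhds_unique tendsto_const_nhds h3
  exact hfin
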